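/- DKC regularity of the regularized Burg entropy: Fix σ > 0 and let h(t) = −log t + (σ/2)t² on (0, ∞), so h′(t) = −1/t + σt and h″(t) = 1/t² + σ. For every δ > 0 and all y, z > 0 with |h′(y) − h′(z)| ≤ δ: (i) y/z + z/y ≤ 2 + δ²/σ; and (ii) h″(y)/h″(z) ≤ 1 + (2 + δ²/σ)². -/

import Mathlib

/-- **DKC regularity of the regularized Burg entropy** `h(t) = -log t + (σ/2) t²` on
`(0, ∞)` with `σ > 0`: `h'(t) = -1/t + σ t`, `h''(t) = 1/t² + σ`, and for every `δ > 0`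
and all `y, z > 0` with `|h'(y) - h'(z)| ≤ δ`:
(i) `y/z + z/y ≤ 2 + δ²/σ`; (ii) `h''(y)/h''(z) ≤ 1 + (2 + δ²/σ)²`. -/
theorem burg_entropy_dkc (σ : ℝ) (hσ : 0 < σ) :
    (∀ t : ℝ, 0 < t →
      HasDerivAt (fun s : ℝ => -Real.log s + σ / 2 * s ^ 2) (-(1 / t) + σ * t) t) ∧
    (∀ t : ℝ, 0 < t →
      HasDerivAt (fun s : ℝ => -(1 / s) + σ * s) (1 / t ^ 2 + σ) t) ∧
    (∀ δ : ℝ, 0 < δ → ∀ y z : ℝ, 0 < y → 0 < z →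
      |(-(1 / y) + σ * y) - (-(1 / z) + σ * z)| ≤ δ →
      y / z + z / y ≤ 2 + δ ^ 2 / σ ∧
      (1 / y ^ 2 + σ) / (1 / z ^ 2 + σ) ≤ 1 + (2 + δ ^ 2 / σ) ^ 2) := by
  refine ⟨?_, ?_, ?_⟩
  · intro t ht
    have h1 : HasDerivAt (fun s : ℝ => -Real.log s + σ / 2 * s ^ 2)
        (-(t⁻¹) + σ / 2 * (2 * t ^ 1)) t :=
      ((Real.hasDerivAt_log (ne_of_gt ht)).neg).add
        ((hasDerivAt_pow 2 t).const_mul (σ / 2))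
    convert h1 using 1
    field_simp
  · intro t ht
    have h1 : HasDerivAt (fun s : ℝ => -(1 / s) + σ * s)
        (-(-(t ^ 2)⁻¹) + σ * 1) t := by
      have := (hasDerivAt_inv (ne_of_gt ht)).neg.add ((hasDerivAt_id t).const_mul σ)
      have hf : (fun s : ℝ => -(1 / s) + σ * s) = ((-fun y : ℝ => y⁻¹) + fun y => σ * id y) := by
        funext s
        simp [one_div]
      rw [hf]
      exact this
    convert h1 using 1
    field_simp
  · intro δ hδ y z hy hz hle
    have key : (-(1 / y) + σ * y) - (-(1 / z) + σ * z) = (y - z) * (1 / (y * z) + σ) := by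
      field_simp
      ring
    have hyz : 0 < y * z := mul_pos hy hz
    have hpos : 0 < 1 / (y * z) + σ := by positivity
    have habs : |y - z| * (1 / (y * z) + σ) ≤ δ := by
      rw [key, abs_mul, abs_of_pos hpos] at hle
      exact hle
    have h1 : |y - z| ≤ δ / σ := by
      rw [le_div_iff₀ hσ]
      nlinarith [abs_nonneg (y - z), mul_nonneg (abs_nonneg (y - z)) (le_of_lt (show (0:ℝ) < 1 / (y * z) by positivity))]
    have h2 : |y - z| * (1 / (y * z)) ≤ δ := by
      nlinarith [abs_nonneg (y - z)]
    have hsq : (y - z) ^ 2 / (y * z) ≤ δ ^ 2 / σ := by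
      have heq : (y - z) ^ 2 / (y * z) = |y - z| * (|y - z| * (1 / (y * z))) := by
        rw [← mul_assoc, ← abs_mul, abs_mul_self]; ring
      rw [heq]
      have h3 : 0 ≤ |y - z| * (1 / (y * z)) := by positivity
      calc |y - z| * (|y - z| * (1 / (y * z))) ≤ (δ / σ) * δ := by
            apply mul_le_mul h1 h2 h3 (by positivity)
        _ = δ ^ 2 / σ := by ring
    have hi : y / z + z / y ≤ 2 + δ ^ 2 / σ := by
      have heq : y / z + z / y = 2 + (y - z) ^ 2 / (y * z) := by
        field_simp; ring
      rw [heq]; linarith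
    refine ⟨hi, ?_⟩
    set M : ℝ := 2 + δ ^ 2 / σ with hM
    have hM2 : z / y ≤ M := by
      have : 0 ≤ y / z := by positivity
      linarith
    have hnum : 1 / y ^ 2 ≤ M ^ 2 * (1 / z ^ 2) := by
      have h0 : 0 ≤ z / y := by positivity
      have hzy2 : (z / y) ^ 2 ≤ M ^ 2 := by nlinarith
      rw [div_pow] at hzy2
      have heq : 1 / y ^ 2 = (z ^ 2 / y ^ 2) * (1 / z ^ 2) := by field_simp
      rw [heq]
      exact mul_le_mul_of_nonneg_right hzy2 (by positivity)
    have hden : 0 < 1 / z ^ 2 + σ := by positivity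
    rw [div_le_iff₀ hden]
    have hσle : σ ≤ 1 / z ^ 2 + σ := le_add_of_nonneg_left (by positivity)
    nlinarith [hnum, hσle, sq_nonneg M, (by positivity : (0:ℝ) < 1 / z ^ 2)]
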